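/- Let G be a hyperbolic random graph on n vertices with parameters α ∈ (1/2,1) and C ∈ ℝ, and fix τ > 0. Let I be any fixed angular interval consisting of at most w = e^{γ(n,τ)}·log^{(3)}(n) consecutive sectors of the sector decomposition. Then the expected number of sampled points whose angular coordinate lies in I is at most (1/2)·e^{γ(n,τ)}·log^{(3)}(n)·γ(n,τ)·(1 ± o(1)); in particular, for all sufficiently large n it is at most (1/2)·τ·log^{(2)}(n). -/

import Mathlib

open MeasureTheory ProbabilityTheory Filter Real Asymptotics

/-- Twice iterated natural logarithm. -/
noncomputable def loglog (n : ℕ) : ℝ := Real.log (Real.log n)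

/-- Thrice iterated natural logarithm. -/
noncomputable def logloglog (n : ℕ) : ℝ := Real.log (Real.log (Real.log n))

/-- `γ(n, τ) = log(τ·log^{(2)}(n) / (2·(log^{(3)}(n))²))`. -/
noncomputable def gam (n : ℕ) (τ : ℝ) : ℝ :=
  Real.log (τ * loglog n / (2 * (logloglog n) ^ 2))

/-- The radius `R = 2·log n + C` of the hyperbolic disk. -/
noncomputable def bigR (C : ℝ) (n : ℕ) : ℝ := 2 * Real.log n + C

/-- The threshold radius `ρ(n) = R − log((π/2)·e^{C/2}·γ(n,τ))`. -/
noncomputable def rho (C τ : ℝ) (n : ℕ) : ℝ :=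
  bigR C n - Real.log (Real.pi / 2 * Real.exp (C / 2) * gam n τ)

/-- `θ_n`, the maximal angular distance at which two points of radius `ρ(n)` are
adjacent in the hyperbolic disk of radius `R`. -/
noncomputable def theta (C τ : ℝ) (n : ℕ) : ℝ :=
  Real.arccos ((Real.cosh (rho C τ n) ^ 2 - Real.cosh (bigR C n)) /
    Real.sinh (rho C τ n) ^ 2)

/-- The number of sectors of angular width `θ_n` in the disk. -/
noncomputable def nSec (C τ : ℝ) (n : ℕ) : ℕ := ⌊2 * Real.pi / theta C τ n⌋₊

/-- The threshold `w = e^{γ(n,τ)}·log^{(3)}(n)` distinguishing narrow and wide runs. -/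
noncomputable def wThr (n : ℕ) (τ : ℝ) : ℝ := Real.exp (gam n τ) * logloglog n

/-- The index of the sector (among `n'` equal sectors of the disk) containing the
angle `φ`. -/
noncomputable def sectorIdx (n' : ℕ) (φ : ℝ) : ZMod n' :=
  ((⌊φ * n' / (2 * Real.pi)⌋ : ℤ) : ZMod n')

/-- `occupancy n' angles k` is `true` iff sector `k` contains the angular coordinate of
at least one of the points. -/
noncomputable def occupancy {n : ℕ} (n' : ℕ) (angles : Fin n → ℝ) (k : ZMod n') : Bool :=
  @decide (∃ i, sectorIdx n' (angles i) = k) (Classical.propDecidable _)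

/-- The length of the maximal circular run of `true`s of `s` containing the index `i`;
`0` if `s i = false`. -/
noncomputable def runLen {n' : ℕ} (s : ZMod n' → Bool) (i : ZMod n') : ℕ :=
  sSup {k : ℕ | k ≤ n' ∧ ∃ j : ZMod n',
    (∀ m : ℕ, m < k → s (j + (m : ZMod n')) = true) ∧
    ∃ t : ℕ, t < k ∧ i = j + (t : ZMod n')}

/-- The number of indices lying in a success run of length greater than `w`. -/
noncomputable def runSumGT {n' : ℕ} (w : ℝ) (s : ZMod n' → Bool) : ℕ :=
  Nat.card {i : ZMod n' | w < (runLen s i : ℝ)}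

/-- The probability density of a point (angle, radius) of a hyperbolic random graph
with parameters `α` and disk radius `R`. -/
noncomputable def hrgPDF (α R : ℝ) (p : ℝ × ℝ) : ℝ :=
  if 0 ≤ p.1 ∧ p.1 < 2 * Real.pi ∧ 0 ≤ p.2 ∧ p.2 ≤ R then
    (1 / (2 * Real.pi)) * (α * Real.sinh (α * p.2) / (Real.cosh (α * R) - 1))
  else 0

/-- The distribution of a single point (angle, radius) of a hyperbolic random graph. -/
noncomputable def hrgMeasure (α R : ℝ) : Measure (ℝ × ℝ) :=
  volume.withDensity fun p => ENNReal.ofReal (hrgPDF α R p)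

/-- `pts` is a sample of a hyperbolic random graph on `n` vertices with parameters
`α` and `C`: the points (angle, radius) are independent, each with the hyperbolic
density on the disk of radius `R = 2 log n + C`. -/
structure IsHRG (α C : ℝ) (n : ℕ) {Ω : Type*} [MeasurableSpace Ω] (μ : Measure Ω)
    (pts : Fin n → Ω → ℝ × ℝ) : Prop where
  meas : ∀ i, Measurable (pts i)
  indep : iIndepFun pts μ
  law : ∀ i, Measure.map (pts i) μ = hrgMeasure α (bigR C n)

/-- The number of sampled points whose angular coordinate lies in the angular interval
formed by the `ℓ` consecutive sectors `j, j+1, …, j+ℓ−1`. -/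
noncomputable def ptsInWindow {n : ℕ} (n' : ℕ) (angles : Fin n → ℝ)
    (j : ZMod n') (ℓ : ℕ) : ℕ :=
  Nat.card {i : Fin n | ∃ t : ℕ, t < ℓ ∧ sectorIdx n' (angles i) = j + (t : ZMod n')}


/-! ### Auxiliary definitions -/

/-- The radial density function. -/
noncomputable def radial (α R : ℝ) (y : ℝ) : ℝ :=
  if 0 ≤ y ∧ y ≤ R then α * Real.sinh (α * y) / (Real.cosh (α * R) - 1) else 0

/-- The argument of `arccos` in the definition of `theta`. -/
noncomputable def cArg (C τ : ℝ) (n : ℕ) : ℝ :=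
  (Real.cosh (rho C τ n) ^ 2 - Real.cosh (bigR C n)) / Real.sinh (rho C τ n) ^ 2

noncomputable def qq (C τ : ℝ) (n : ℕ) : ℝ := Real.exp (-2 * rho C τ n)

noncomputable def Afun (C τ : ℝ) (n : ℕ) : ℝ := (2 - cArg C τ n) / (1 - qq C τ n)

noncomputable def Bfun (C τ : ℝ) (n : ℕ) : ℝ := gam n τ * Afun C τ n / (2 * n)

/-! ### Elementary analytic lemmas -/

lemma arccos_le_sqrt_mul (c : ℝ) (h0 : 0 ≤ 1 - c) (h8 : 1 - c ≤ 1/8) :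
    Real.arccos c ≤ Real.sqrt (2 * (1 - c)) * (2 - c) := by
  set s : ℝ := Real.sqrt (2 * (1 - c)) with hs
  have hs0 : 0 ≤ s := Real.sqrt_nonneg _
  have hssq : s ^ 2 = 2 * (1 - c) := Real.sq_sqrt (by linarith)
  have hs12 : s ≤ 1/2 := by nlinarith [hssq, hs0]
  have hc2 : (7:ℝ)/8 ≤ c := by linarith
  have hc1 : c ≤ 1 := by linarith
  set y : ℝ := s * (2 - c) with hy
  have hy0 : 0 ≤ y := by nlinarith
  have hy1' : y ≤ 1 := by nlinarith
  have hy1 : |y| ≤ 1 := by rw [abs_of_nonneg hy0]; exact hy1'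
  have hyπ : y ≤ π := le_trans hy1' (by linarith [Real.pi_gt_three])
  have hcb := Real.cos_bound hy1
  have hy2 : y^2 = 2*(1-c)*(2-c)^2 := by rw [hy]; nlinarith [hssq]
  have hy4 : y^4 = 4*(1-c)^2*(2-c)^4 := by
    have : y^4 = (y^2)^2 := by ring
    rw [this, hy2]; ring
  have hcos : Real.cos y ≤ c := by
    have h1 : Real.cos y ≤ 1 - y^2/2 + y^4 * (5/96) := by
      have h2 := (abs_le.1 hcb).2
      rw [abs_of_nonneg hy0] at h2; linarith
    have key : 1 - c ≤ y^2/2 - y^4*(5/96) := by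
      rw [hy2, hy4]
      have h24 : 0 ≤ (2 + (1-c)) - (5/24)*(1+(1-c))^4 := by nlinarith [h0, h8]
      nlinarith [mul_nonneg (mul_nonneg h0 h0) h24]
    linarith
  calc Real.arccos c ≤ Real.arccos (Real.cos y) := by
        unfold Real.arccos
        have := Real.monotone_arcsin hcos
        linarith
    _ = y := Real.arccos_cos hy0 hyπ

/-! ### Asymptotic lemmas -/

lemma tendsto_log_nat : Tendsto (fun n : ℕ => Real.log n) atTop atTop :=
  Real.tendsto_log_atTop.comp tendsto_natCast_atTop_atTop

lemma tendsto_loglog : Tendsto loglog atTop atTop :=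
  Real.tendsto_log_atTop.comp tendsto_log_nat

lemma tendsto_logloglog : Tendsto logloglog atTop atTop :=
  Real.tendsto_log_atTop.comp tendsto_loglog

lemma tendsto_log_div_id : Tendsto (fun x : ℝ => Real.log x / x) atTop (nhds 0) :=
  Real.isLittleO_log_id_atTop.tendsto_div_nhds_zero

lemma tendsto_sub_two_log : Tendsto (fun x : ℝ => x - 2 * Real.log x) atTop atTop := by
  have h := Real.isLittleO_log_id_atTop.bound (show (0:ℝ) < 1/4 by norm_num)
  refine tendsto_atTop_mono' atTop ?_ (tendsto_id.atTop_div_const two_pos)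
  filter_upwards [h, eventually_ge_atTop (0:ℝ)] with x hx hx0
  simp only [Real.norm_eq_abs, id] at hx
  have := abs_le.1 hx
  rw [abs_of_nonneg hx0] at this
  simp only [id]
  linarith [this.1, this.2]

lemma gam_eq (τ : ℝ) (hτ : 0 < τ) :
    ∀ᶠ n : ℕ in atTop, gam n τ =
      Real.log τ - Real.log 2 + logloglog n - 2 * Real.log (logloglog n) := by
  filter_upwards [tendsto_loglog.eventually_gt_atTop 0,
    tendsto_logloglog.eventually_gt_atTop 0] with n hLL hLLL
  unfold gam
  rw [Real.log_div (by positivity) (by positivity), Real.log_mul (ne_of_gt hτ) (ne_of_gt hLL),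
    Real.log_mul (by norm_num) (by positivity), Real.log_pow]
  unfold logloglog loglog at *
  push_cast
  ring

lemma tendsto_gam (τ : ℝ) (hτ : 0 < τ) : Tendsto (fun n => gam n τ) atTop atTop := by
  refine Tendsto.congr' (EventuallyEq.symm (gam_eq τ hτ)) ?_
  have h1 : Tendsto (fun n => logloglog n - 2 * Real.log (logloglog n)) atTop atTop :=
    tendsto_sub_two_log.comp tendsto_logloglog
  simpa [add_sub_assoc] using tendsto_atTop_add_const_left atTop (Real.log τ - Real.log 2) h1

lemma tendsto_gam_div_LLL (τ : ℝ) (hτ : 0 < τ) :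
    Tendsto (fun n => gam n τ / logloglog n) atTop (nhds 1) := by
  have h0 : Tendsto (fun n => (Real.log τ - Real.log 2) / logloglog n) atTop (nhds 0) :=
    tendsto_const_nhds.div_atTop tendsto_logloglog
  have h1 : Tendsto (fun n => Real.log (logloglog n) / logloglog n) atTop (nhds 0) :=
    tendsto_log_div_id.comp tendsto_logloglog
  have h2 : Tendsto (fun n => (Real.log τ - Real.log 2) / logloglog n + 1
      - 2 * (Real.log (logloglog n) / logloglog n)) atTop (nhds ((0:ℝ) + 1 - 2 * 0)) :=
    ((h0.add tendsto_const_nhds).sub (h1.const_mul 2))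
  norm_num at h2
  refine Tendsto.congr' ?_ h2
  filter_upwards [gam_eq τ hτ, tendsto_logloglog.eventually_gt_atTop 0] with n hg hLLL
  rw [hg]
  field_simp

lemma gam_le (τ : ℝ) (hτ : 0 < τ) :
    ∀ᶠ n : ℕ in atTop, gam n τ ≤ |Real.log τ| + Real.log n := by
  filter_upwards [gam_eq τ hτ, tendsto_logloglog.eventually_ge_atTop 1,
    tendsto_loglog.eventually_gt_atTop 0, tendsto_log_nat.eventually_gt_atTop 0]
    with n hg h1 hLL hlog
  have hlogLLL : 0 ≤ Real.log (logloglog n) := Real.log_nonneg h1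
  have h2 : logloglog n ≤ Real.log n := by
    have a1 : loglog n ≤ Real.log n := Real.log_le_self hlog.le
    have a2 : logloglog n ≤ loglog n := Real.log_le_self hLL.le
    linarith
  have : Real.log τ ≤ |Real.log τ| := le_abs_self _
  have hl2 : 0 ≤ Real.log 2 := Real.log_nonneg one_le_two
  linarith [hg]

lemma tendsto_gam_div_n (τ : ℝ) (hτ : 0 < τ) :
    Tendsto (fun n : ℕ => gam n τ / n) atTop (nhds 0) := by
  have hb : Tendsto (fun n : ℕ => (|Real.log τ| + Real.log n) / n) atTop (nhds 0) := by
    have h1 : Tendsto (fun n : ℕ => |Real.log τ| / n) atTop (nhds 0) :=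
      tendsto_const_nhds.div_atTop tendsto_natCast_atTop_atTop
    have h2 : Tendsto (fun n : ℕ => Real.log n / n) atTop (nhds 0) := by
      have := tendsto_log_div_id.comp (tendsto_natCast_atTop_atTop (R := ℝ))
      exact this
    simpa [add_div] using h1.add h2
  refine squeeze_zero' ?_ ?_ hb
  · filter_upwards [(tendsto_gam τ hτ).eventually_ge_atTop 0,
      eventually_gt_atTop 0] with n h1 h2
    positivity
  · filter_upwards [gam_le τ hτ, eventually_gt_atTop 0] with n h1 h2
    have hn : (0:ℝ) < n := by exact_mod_cast h2
    gcongr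

lemma tendsto_rho (C τ : ℝ) (hτ : 0 < τ) : Tendsto (fun n => rho C τ n) atTop atTop := by
  have hb : ∀ᶠ n : ℕ in atTop,
      Real.log n + (C/2 - Real.log (Real.pi/2) - |Real.log τ|) ≤ rho C τ n := by
    filter_upwards [gam_le τ hτ, (tendsto_gam τ hτ).eventually_ge_atTop 1,
      tendsto_log_nat.eventually_gt_atTop 0] with n h1 h2 h3
    unfold rho bigR
    have hγ : (0:ℝ) < gam n τ := lt_of_lt_of_le zero_lt_one h2
    rw [Real.log_mul (by positivity) (ne_of_gt hγ), Real.log_mul (by positivity) (Real.exp_ne_zero _),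
      Real.log_exp]
    have h4 : Real.log (gam n τ) ≤ gam n τ := Real.log_le_self hγ.le
    linarith
  exact tendsto_atTop_mono' atTop hb
    (tendsto_atTop_add_const_right atTop _ tendsto_log_nat)

lemma tendsto_bigR (C : ℝ) : Tendsto (fun n => bigR C n) atTop atTop := by
  unfold bigR
  exact tendsto_atTop_add_const_right _ C ((tendsto_log_nat).const_mul_atTop two_pos)

/-! ### Bounds on the sector angle -/

lemma qq_le_half (C τ : ℝ) (n : ℕ) (hρ : 1 ≤ rho C τ n) : qq C τ n ≤ 1/2 := by
  unfold qq
  have h1 : Real.exp (-2 * rho C τ n) ≤ Real.exp (-2) :=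
    Real.exp_le_exp.2 (by linarith)
  have h2 : Real.exp (-2) ≤ 1/2 := by
    rw [Real.exp_neg, inv_eq_one_div, div_le_div_iff₀ (Real.exp_pos 2) two_pos]
    nlinarith [Real.add_one_le_exp 2]
  linarith

lemma oneSubC_bound (C τ : ℝ) (n : ℕ) (hρ : 1 ≤ rho C τ n) (hR : 0 < bigR C n)
    (hγ : 1 ≤ gam n τ) (hn : 1 ≤ n) :
    0 < 1 - cArg C τ n ∧
      1 - cArg C τ n ≤ (Real.pi * gam n τ / n) ^ 2 / (2 * (1 - qq C τ n) ^ 2) := by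
  set γ := gam n τ with hγdef
  set ρ := rho C τ n with hρdef
  set R := bigR C n with hRdef
  set q := qq C τ n with hqdef
  set a : ℝ := Real.pi / 2 * Real.exp (C / 2) * γ with hadef
  have hγ0 : (0:ℝ) < γ := lt_of_lt_of_le zero_lt_one hγ
  have ha : 0 < a := by
    have := Real.pi_pos
    have := Real.exp_pos (C/2)
    positivity
  have hN : (0:ℝ) < n := by exact_mod_cast hn
  have hq1 : q < 1 := by
    rw [hqdef]; unfold qq
    rw [Real.exp_lt_one_iff]
    linarith
  have hq0 : 0 < q := Real.exp_pos _
  have hsρ : 0 < Real.sinh ρ := Real.sinh_pos_iff.2 (by linarith)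
  have hsinh : Real.sinh ρ = Real.exp ρ * (1 - q) / 2 := by
    rw [Real.sinh_eq, hqdef]
    unfold qq
    rw [show -ρ = ρ + -2 * ρ by ring, Real.exp_add, ← hρdef]
    ring
  have hE : Real.exp ρ = Real.exp R / a := by
    rw [hρdef]; unfold rho
    rw [← hRdef, Real.exp_sub, Real.exp_log ha]
  have heR : Real.exp R = (n:ℝ)^2 * Real.exp C := by
    rw [hRdef]; unfold bigR
    rw [Real.exp_add, show (2:ℝ) * Real.log n = Real.log n + Real.log n by ring, Real.exp_add,
      Real.exp_log hN]
    ring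
  have h1c : 1 - cArg C τ n = (Real.cosh R - 1) / Real.sinh ρ ^ 2 := by
    unfold cArg
    rw [← hρdef, ← hRdef]
    field_simp
    nlinarith [Real.cosh_sq_sub_sinh_sq ρ]
  have hcoshR : Real.cosh R - 1 ≤ Real.exp R / 2 := by
    rw [Real.cosh_eq]
    have h1 : Real.exp (-R) ≤ 1 := Real.exp_le_one_iff.2 (by linarith)
    linarith
  have hcosh1 : 1 < Real.cosh R := Real.one_lt_cosh.2 (ne_of_gt hR)
  constructor
  · rw [h1c]
    exact div_pos (by linarith) (pow_pos hsρ 2)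
  · have hu : (0:ℝ) < 1 - q := by linarith
    rw [h1c, div_le_div_iff₀ (pow_pos hsρ 2) (mul_pos two_pos (pow_pos hu 2))]
    have hC2 : Real.exp (C/2) * Real.exp (C/2) = Real.exp C := by
      rw [← Real.exp_add]; norm_num
    have ha2 : a^2 = Real.pi^2/4 * Real.exp C * γ^2 := by
      rw [hadef, show (Real.pi/2*Real.exp (C/2)*γ)^2
        = Real.pi^2/4*(Real.exp (C/2)*Real.exp (C/2))*γ^2 from by ring, hC2]
    have hs2 : Real.sinh ρ ^ 2 = ((n:ℝ)^2 * Real.exp C / a)^2 * (1-q)^2/4 := by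
      rw [hsinh, hE, heR]; ring
    rw [hs2]
    have hecp : 0 < Real.exp C := Real.exp_pos C
    have hπ : 0 < Real.pi := Real.pi_pos
    have hrhs : (Real.pi * γ / n) ^ 2 * (((n:ℝ)^2 * Real.exp C / a)^2 * (1-q)^2/4)
        = (n:ℝ)^2 * Real.exp C / 2 * (2 * (1-q)^2) := by
      rw [show (((n:ℝ)^2 * Real.exp C / a)^2) = ((n:ℝ)^2 * Real.exp C)^2 / a^2 from by ring,
        ha2]
      field_simp
    rw [hrhs]
    have h2 : Real.cosh R - 1 ≤ (n:ℝ)^2 * Real.exp C / 2 := by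
      rw [← heR]; linarith
    have h3 := mul_le_mul_of_nonneg_right h2 (by positivity : (0:ℝ) ≤ 2*(1-q)^2)
    linarith

lemma main_bounds (C τ : ℝ) (n : ℕ) (hρ : 1 ≤ rho C τ n) (hR : 0 < bigR C n)
    (hγ : 1 ≤ gam n τ) (hn : 1 ≤ n) (hsmall : Real.pi * gam n τ / n ≤ 1/4)
    (hB : Bfun C τ n ≤ 1/2) :
    1 ≤ nSec C τ n ∧
      2 * ((n:ℝ) / (nSec C τ n)) / gam n τ ≤ Afun C τ n / (1 - Bfun C τ n) := by
  obtain ⟨hc0, hcb⟩ := oneSubC_bound C τ n hρ hR hγ hn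
  set γ := gam n τ
  set c := cArg C τ n
  set q := qq C τ n
  have hγ0 : (0:ℝ) < γ := lt_of_lt_of_le zero_lt_one hγ
  have hN : (0:ℝ) < n := by exact_mod_cast hn
  have hq0 : 0 < q := Real.exp_pos _
  have hqh : q ≤ 1/2 := qq_le_half C τ n hρ
  have hu : (1:ℝ)/2 ≤ 1 - q := by linarith
  have hu0 : (0:ℝ) < 1 - q := by linarith
  have hπ := Real.pi_pos
  have h18 : 1 - c ≤ 1/8 := by
    have h1 : (Real.pi * γ / n)^2 ≤ (1/4)^2 := by
      have h0 : 0 ≤ Real.pi * γ / n := by positivity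
      nlinarith
    have h2 : (1:ℝ)/2 ≤ 2 * (1-q)^2 := by nlinarith
    calc 1 - c ≤ (Real.pi * γ / n)^2 / (2*(1-q)^2) := hcb
      _ ≤ (1/4)^2 / (1/2) := by
          apply div_le_div₀ (by norm_num) h1 (by norm_num) h2
      _ ≤ 1/8 := by norm_num
  have hθdef : theta C τ n = Real.arccos c := rfl
  have hsq : Real.sqrt (2 * (1 - c)) ≤ Real.pi * γ / (n * (1 - q)) := by
    have h1 : 2 * (1 - c) ≤ (Real.pi * γ / (n * (1-q)))^2 := by
      have : (Real.pi * γ / n)^2 / (2*(1-q)^2) * 2 = (Real.pi * γ / (n * (1-q)))^2 := by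
        field_simp
      nlinarith [hcb]
    calc Real.sqrt (2*(1-c)) ≤ Real.sqrt ((Real.pi * γ / (n * (1-q)))^2) :=
          Real.sqrt_le_sqrt h1
      _ = Real.pi * γ / (n * (1-q)) := Real.sqrt_sq (by positivity)
  have hc2 : (0:ℝ) < 2 - c := by linarith
  have hθub : theta C τ n ≤ Real.pi * γ / n * Afun C τ n := by
    have h1 : theta C τ n ≤ Real.sqrt (2 * (1 - c)) * (2 - c) :=
      arccos_le_sqrt_mul c hc0.le h18
    have h2 : Real.sqrt (2*(1-c)) * (2-c) ≤ (Real.pi * γ / (n * (1-q))) * (2-c) :=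
      mul_le_mul_of_nonneg_right hsq (by linarith)
    have h3 : (Real.pi * γ / (n * (1-q))) * (2-c) = Real.pi * γ / n * Afun C τ n := by
      unfold Afun
      change (Real.pi * γ / (n * (1-q))) * (2-c) = Real.pi * γ / n * ((2 - c) / (1 - q))
      field_simp
      try ring
    linarith [h3 ▸ h2]
  have hθpos : 0 < theta C τ n := by
    rw [hθdef]
    exact Real.arccos_pos.2 (by linarith)
  have hA0 : 0 < Afun C τ n := by
    unfold Afun
    positivity
  have h1B0 : (0:ℝ) < 1 - Bfun C τ n := by linarith
  have hfloor : 2 * Real.pi / theta C τ n - 1 < (nSec C τ n : ℝ) :=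
    Nat.sub_one_lt_floor _
  have h2π : 2 * (n:ℝ) / (γ * Afun C τ n) ≤ 2 * Real.pi / theta C τ n := by
    have hA0' : 0 < Afun C τ n := by unfold Afun; positivity
    have e1 : 2 * (n:ℝ) / (γ * Afun C τ n) = 2 * Real.pi / (Real.pi * γ / n * Afun C τ n) := by
      rw [div_eq_div_iff (by positivity) (by positivity)]
      field_simp
      try ring
    rw [e1]
    gcongr
  set A := Afun C τ n
  set B := Bfun C τ n
  have hBdef : B = γ * A / (2 * n) := rfl
  have hD : 2 * (n:ℝ) / (γ * A) - 1 = (2 * n / (γ * A)) * (1 - B) := by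
    rw [hBdef]; field_simp; try ring
  have hDpos : (0:ℝ) < (2 * n / (γ * A)) * (1 - B) := by
    have : (0:ℝ) < 1 - B := by linarith
    positivity
  have hn' : (2 * (n:ℝ) / (γ * A)) * (1 - B) < (nSec C τ n : ℝ) := by
    rw [← hD]; linarith
  have hnsec0 : (0:ℝ) < (nSec C τ n : ℝ) := lt_trans hDpos hn'
  constructor
  · exact Nat.cast_pos.mp hnsec0
  · have h1 : (n:ℝ) / (nSec C τ n) ≤ (n:ℝ) / ((2 * n / (γ * A)) * (1 - B)) := by
      gcongr
    have h2 : (n:ℝ) / ((2 * n / (γ * A)) * (1 - B)) = γ * A / (2 * (1 - B)) := by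
      rw [div_eq_div_iff (by positivity) (by positivity)]
      field_simp
      try ring
    calc 2 * ((n:ℝ) / (nSec C τ n)) / γ ≤ 2 * (γ * A / (2 * (1-B))) / γ := by
          rw [h2] at h1; gcongr
      _ = A / (1 - B) := by
          rw [div_eq_div_iff hγ0.ne' h1B0.ne']
          field_simp
          try ring

/-! ### Limits of the correction factors -/

lemma tendsto_qq (C τ : ℝ) (hτ : 0 < τ) : Tendsto (fun n => qq C τ n) atTop (nhds 0) := by
  unfold qq
  refine Real.tendsto_exp_atBot.comp ?_
  exact (tendsto_rho C τ hτ).const_mul_atTop_of_neg (show (-2:ℝ) < 0 by norm_num)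

lemma tendsto_cArg (C τ : ℝ) (hτ : 0 < τ) :
    Tendsto (fun n => cArg C τ n) atTop (nhds 1) := by
  have hd : Tendsto (fun n => 1 - cArg C τ n) atTop (nhds 0) := by
    have hub : Tendsto (fun n : ℕ =>
        (Real.pi * gam n τ / n) ^ 2 / (2 * (1 - qq C τ n) ^ 2)) atTop (nhds 0) := by
      have h1 : Tendsto (fun n : ℕ => (Real.pi * gam n τ / n) ^ 2) atTop (nhds 0) := by
        have := ((tendsto_gam_div_n τ hτ).const_mul Real.pi)
        have h2 : Tendsto (fun n : ℕ => Real.pi * gam n τ / n) atTop (nhds 0) := by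
          simpa [mul_div_assoc] using this
        simpa using h2.pow 2
      have h2 : Tendsto (fun n : ℕ => 2 * (1 - qq C τ n) ^ 2) atTop (nhds 2) := by
        have := ((tendsto_const_nhds (x := (1:ℝ))).sub (tendsto_qq C τ hτ)).pow 2
        have h3 := this.const_mul 2
        norm_num at h3
        exact h3
      have := h1.div h2 (by norm_num)
      rw [zero_div] at this
      exact this
    refine squeeze_zero' ?_ ?_ hub
    · filter_upwards [(tendsto_rho C τ hτ).eventually_ge_atTop 1,
        (tendsto_bigR C).eventually_gt_atTop 0,
        (tendsto_gam τ hτ).eventually_ge_atTop 1,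
        eventually_ge_atTop 1] with n h1 h2 h3 h4
      exact (oneSubC_bound C τ n h1 h2 h3 h4).1.le
    · filter_upwards [(tendsto_rho C τ hτ).eventually_ge_atTop 1,
        (tendsto_bigR C).eventually_gt_atTop 0,
        (tendsto_gam τ hτ).eventually_ge_atTop 1,
        eventually_ge_atTop 1] with n h1 h2 h3 h4
      exact (oneSubC_bound C τ n h1 h2 h3 h4).2
  have := (tendsto_const_nhds (x := (1:ℝ))).sub hd
  simpa using this

lemma tendsto_Afun (C τ : ℝ) (hτ : 0 < τ) :
    Tendsto (fun n => Afun C τ n) atTop (nhds 1) := by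
  unfold Afun
  have h1 : Tendsto (fun n => 2 - cArg C τ n) atTop (nhds 1) := by
    have := (tendsto_const_nhds (x := (2:ℝ))).sub (tendsto_cArg C τ hτ)
    norm_num at this
    exact this
  have h2 : Tendsto (fun n => 1 - qq C τ n) atTop (nhds 1) := by
    have := (tendsto_const_nhds (x := (1:ℝ))).sub (tendsto_qq C τ hτ)
    norm_num at this
    exact this
  have := h1.div h2 one_ne_zero
  rw [div_one] at this
  exact this

lemma tendsto_Bfun (C τ : ℝ) (hτ : 0 < τ) :
    Tendsto (fun n => Bfun C τ n) atTop (nhds 0) := by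
  have h1 : Tendsto (fun n : ℕ => gam n τ / n * Afun C τ n / 2) atTop (nhds 0) := by
    have := ((tendsto_gam_div_n τ hτ).mul (tendsto_Afun C τ hτ)).div_const 2
    norm_num at this
    exact this
  refine Tendsto.congr' ?_ h1
  filter_upwards [eventually_gt_atTop 0] with n hn
  unfold Bfun
  rw [div_mul_eq_mul_div, div_div, mul_comm ((n:ℝ)) 2]

lemma tendsto_G (C τ : ℝ) (hτ : 0 < τ) :
    Tendsto (fun n => Afun C τ n / (1 - Bfun C τ n)) atTop (nhds 1) := by
  have h2 : Tendsto (fun n => 1 - Bfun C τ n) atTop (nhds 1) := by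
    have := (tendsto_const_nhds (x := (1:ℝ))).sub (tendsto_Bfun C τ hτ)
    norm_num at this
    exact this
  have := (tendsto_Afun C τ hτ).div h2 one_ne_zero
  rw [div_one] at this
  exact this

/-! ### Measure-theoretic lemmas -/

lemma radial_measurable (α R : ℝ) : Measurable (radial α R) := by
  unfold radial
  have hset : MeasurableSet {y : ℝ | 0 ≤ y ∧ y ≤ R} := by
    have : {y : ℝ | 0 ≤ y ∧ y ≤ R} = Set.Icc 0 R := by
      ext y; simp [Set.mem_Icc]
    rw [this]; exact measurableSet_Icc
  exact Measurable.ite hset (by fun_prop) measurable_const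

lemma radial_lintegral (α R : ℝ) (hα : 0 < α) (hR : 0 < R) :
    ∫⁻ y : ℝ, ENNReal.ofReal (radial α R y) = 1 := by
  have hD : 0 < Real.cosh (α*R) - 1 := by
    have := Real.one_lt_cosh.2 (show α*R ≠ 0 by positivity)
    linarith
  have hcont : Continuous (fun y : ℝ => α * Real.sinh (α * y) / (Real.cosh (α*R) - 1)) := by
    fun_prop
  have hind : (fun y => ENNReal.ofReal (radial α R y)) =
      (Set.Icc (0:ℝ) R).indicator
        (fun y => ENNReal.ofReal (α * Real.sinh (α * y) / (Real.cosh (α*R) - 1))) := by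
    funext y
    by_cases h : y ∈ Set.Icc (0:ℝ) R
    · rw [Set.indicator_of_mem h]
      unfold radial
      rw [if_pos (Set.mem_Icc.1 h)]
    · rw [Set.indicator_of_notMem h]
      unfold radial
      rw [if_neg (fun hc => h (Set.mem_Icc.2 hc))]
      simp
  rw [hind, lintegral_indicator measurableSet_Icc]
  have hInt : IntegrableOn (fun y : ℝ => α * Real.sinh (α * y) / (Real.cosh (α*R) - 1))
      (Set.Icc (0:ℝ) R) volume := hcont.integrableOn_Icc
  have hnn : 0 ≤ᵐ[volume.restrict (Set.Icc (0:ℝ) R)]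
      (fun y : ℝ => α * Real.sinh (α * y) / (Real.cosh (α*R) - 1)) := by
    filter_upwards [ae_restrict_mem measurableSet_Icc] with y hy
    have hs : 0 ≤ Real.sinh (α*y) := Real.sinh_nonneg_iff.2 (mul_nonneg hα.le hy.1)
    positivity
  rw [← MeasureTheory.ofReal_integral_eq_lintegral_ofReal hInt hnn]
  have hval : ∫ y in Set.Icc (0:ℝ) R, α * Real.sinh (α * y) / (Real.cosh (α*R) - 1) = 1 := by
    rw [MeasureTheory.integral_Icc_eq_integral_Ioc,
      ← intervalIntegral.integral_of_le hR.le]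
    have hderiv : ∀ x ∈ Set.uIcc (0:ℝ) R,
        HasDerivAt (fun y => Real.cosh (α * y) / (Real.cosh (α*R) - 1))
          (α * Real.sinh (α * x) / (Real.cosh (α*R) - 1)) x := by
      intro x _
      have h1 : HasDerivAt (fun y : ℝ => α * y) α x := by
        simpa using (hasDerivAt_id x).const_mul α
      have h2 := (Real.hasDerivAt_cosh (α * x)).comp x h1
      have h3 := h2.div_const (Real.cosh (α*R) - 1)
      rw [show α * Real.sinh (α * x) / (Real.cosh (α*R) - 1)
        = Real.sinh (α * x) * α / (Real.cosh (α*R) - 1) by ring]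
      exact h3
    rw [intervalIntegral.integral_eq_sub_of_hasDerivAt hderiv (hcont.intervalIntegrable _ _)]
    simp only [mul_zero, Real.cosh_zero]
    rw [div_sub_div_same, div_self hD.ne']
  rw [hval]
  simp

lemma sectorIdx_measurableSet (n' : ℕ) (k : ZMod n') :
    MeasurableSet {p : ℝ × ℝ | sectorIdx n' p.1 = k} := by
  have h : {p : ℝ × ℝ | sectorIdx n' p.1 = k} =
      (fun p : ℝ × ℝ => ⌊p.1 * n' / (2 * Real.pi)⌋) ⁻¹' {m : ℤ | ((m : ZMod n') = k)} := rfl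
  rw [h]
  exact ((measurable_fst.mul_const _).div_const _).floor (Set.to_countable _).measurableSet

lemma sector_subset (n' : ℕ) (hn' : 0 < n') (k : ZMod n') (φ : ℝ)
    (h0 : 0 ≤ φ) (h2 : φ < 2 * Real.pi) (hk : sectorIdx n' φ = k) :
    2 * Real.pi * k.val / n' ≤ φ ∧ φ < 2 * Real.pi * (k.val + 1) / n' := by
  have hπ := Real.pi_pos
  set x := φ * n' / (2 * Real.pi) with hx
  have hx0 : 0 ≤ x := by positivity
  have hxn : x < n' := by
    rw [hx, div_lt_iff₀ (by positivity)]
    have hN : (0:ℝ) < n' := by exact_mod_cast hn'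
    calc φ * n' < 2 * Real.pi * n' := by nlinarith
      _ = (n':ℝ) * (2 * Real.pi) := by ring
  set m := ⌊x⌋ with hm
  have hm0 : 0 ≤ m := Int.floor_nonneg.2 hx0
  have hmn : m < (n' : ℤ) := Int.floor_lt.2 (by exact_mod_cast hxn)
  have hmval : m.toNat = k.val := by
    have hcast' : ((m.toNat : ℤ) : ZMod n') = k := by
      rw [Int.toNat_of_nonneg hm0]; exact hk
    have hcast : ((m.toNat : ℕ) : ZMod n') = k := by exact_mod_cast hcast'
    have hlt : m.toNat < n' := by omega
    rw [← hcast, ZMod.val_cast_of_lt hlt]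
  have hfl : (m:ℝ) ≤ x := Int.floor_le x
  have hfu : x < (m:ℝ) + 1 := Int.lt_floor_add_one x
  have hmr : (m:ℝ) = (k.val : ℝ) := by
    have : m = (k.val : ℤ) := by omega
    exact_mod_cast this
  constructor
  · rw [div_le_iff₀ (show (0:ℝ) < n' by exact_mod_cast hn')]
    rw [hx, hmr, le_div_iff₀ (by positivity : (0:ℝ) < 2*Real.pi)] at hfl
    linarith
  · rw [lt_div_iff₀ (show (0:ℝ) < n' by exact_mod_cast hn')]
    rw [hx, hmr, div_lt_iff₀ (by positivity : (0:ℝ) < 2*Real.pi)] at hfu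
    linarith

lemma sector_measure_le (α R : ℝ) (hα : 0 < α) (hR : 0 < R) (n' : ℕ) (hn' : 0 < n')
    (k : ZMod n') :
    hrgMeasure α R {p : ℝ × ℝ | sectorIdx n' p.1 = k} ≤ ENNReal.ofReal (1 / (n' : ℝ)) := by
  have hπ := Real.pi_pos
  have hN : (0:ℝ) < n' := by exact_mod_cast hn'
  set a : ℝ := 2 * Real.pi * k.val / n' with ha
  set b : ℝ := 2 * Real.pi * (k.val + 1) / n' with hb
  set S := {p : ℝ × ℝ | sectorIdx n' p.1 = k} with hS
  have hSm : MeasurableSet S := sectorIdx_measurableSet n' k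
  set g : ℝ × ℝ → ENNReal := fun p =>
    (Set.Ico a b ×ˢ (Set.univ : Set ℝ)).indicator
      (fun p => ENNReal.ofReal ((1 / (2 * Real.pi)) * radial α R p.2)) p with hg
  have hpt : ∀ p ∈ S, ENNReal.ofReal (hrgPDF α R p) ≤ g p := by
    intro p hp
    by_cases hc : 0 ≤ p.1 ∧ p.1 < 2 * Real.pi ∧ 0 ≤ p.2 ∧ p.2 ≤ R
    · have hmem : p ∈ Set.Ico a b ×ˢ (Set.univ : Set ℝ) := by
        obtain ⟨h1, h2⟩ := sector_subset n' hn' k p.1 hc.1 hc.2.1 hp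
        exact ⟨⟨h1, h2⟩, Set.mem_univ _⟩
      rw [hg]
      simp only [Set.indicator_of_mem hmem]
      unfold hrgPDF radial
      rw [if_pos hc, if_pos ⟨hc.2.2.1, hc.2.2.2⟩]
    · unfold hrgPDF
      rw [if_neg hc]
      simp
  calc hrgMeasure α R S = ∫⁻ p in S, ENNReal.ofReal (hrgPDF α R p) ∂volume :=
        withDensity_apply _ hSm
    _ ≤ ∫⁻ p in S, g p ∂volume := setLIntegral_mono' hSm hpt
    _ ≤ ∫⁻ p, g p ∂volume := setLIntegral_le_lintegral _ _
    _ = ENNReal.ofReal (1 / (n' : ℝ)) := by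
        rw [hg, lintegral_indicator (measurableSet_Ico.prod MeasurableSet.univ),
          Measure.volume_eq_prod, ← Measure.prod_restrict, Measure.restrict_univ]
        have hmeas : Measurable (fun y : ℝ => ENNReal.ofReal (1 / (2*Real.pi) * radial α R y)) :=
          ENNReal.measurable_ofReal.comp ((radial_measurable α R).const_mul _)
        rw [lintegral_prod (fun z : ℝ × ℝ => ENNReal.ofReal (1/(2*Real.pi) * radial α R z.2))
          (hmeas.comp measurable_snd).aemeasurable]
        have hinner : ∫⁻ y : ℝ, ENNReal.ofReal (1/(2*Real.pi) * radial α R y) ∂volume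
            = ENNReal.ofReal (1/(2*Real.pi)) := by
          have hev : ∀ y, ENNReal.ofReal (1/(2*Real.pi) * radial α R y)
              = ENNReal.ofReal (1/(2*Real.pi)) * ENNReal.ofReal (radial α R y) :=
            fun y => ENNReal.ofReal_mul (by positivity)
          simp_rw [hev]
          have hm2 : Measurable (fun y : ℝ => ENNReal.ofReal (radial α R y)) :=
            ENNReal.measurable_ofReal.comp (radial_measurable α R)
          rw [lintegral_const_mul _ hm2, radial_lintegral α R hα hR, mul_one]
        simp_rw [hinner]
        rw [lintegral_const, Measure.restrict_apply_univ, Real.volume_Ico,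
          ← ENNReal.ofReal_mul (by positivity)]
        rw [ha, hb]
        congr 1
        field_simp
        try ring
        try exact Or.inl trivial

lemma window_measurableSet (n' : ℕ) (j : ZMod n') (ℓ : ℕ) :
    MeasurableSet {p : ℝ × ℝ | ∃ t : ℕ, t < ℓ ∧ sectorIdx n' p.1 = j + (t : ZMod n')} := by
  have h : {p : ℝ × ℝ | ∃ t : ℕ, t < ℓ ∧ sectorIdx n' p.1 = j + (t : ZMod n')} =
      ⋃ t ∈ Finset.range ℓ, {p : ℝ × ℝ | sectorIdx n' p.1 = j + (t : ZMod n')} := by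
    ext p; simp [Finset.mem_range]
  rw [h]
  exact (Finset.range ℓ).measurableSet_biUnion (fun t _ => sectorIdx_measurableSet n' _)

lemma window_measure_le (α R : ℝ) (hα : 0 < α) (hR : 0 < R) (n' : ℕ) (hn' : 0 < n')
    (j : ZMod n') (ℓ : ℕ) :
    hrgMeasure α R {p : ℝ × ℝ | ∃ t : ℕ, t < ℓ ∧ sectorIdx n' p.1 = j + (t : ZMod n')} ≤
      (ℓ : ENNReal) * ENNReal.ofReal (1 / (n' : ℝ)) := by
  have h : {p : ℝ × ℝ | ∃ t : ℕ, t < ℓ ∧ sectorIdx n' p.1 = j + (t : ZMod n')} =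
      ⋃ t ∈ Finset.range ℓ, {p : ℝ × ℝ | sectorIdx n' p.1 = j + (t : ZMod n')} := by
    ext p; simp [Finset.mem_range]
  rw [h]
  calc hrgMeasure α R (⋃ t ∈ Finset.range ℓ, {p : ℝ × ℝ | sectorIdx n' p.1 = j + (t : ZMod n')})
      ≤ ∑ t ∈ Finset.range ℓ, hrgMeasure α R {p : ℝ × ℝ | sectorIdx n' p.1 = j + (t : ZMod n')} :=
        measure_biUnion_finset_le _ _
    _ ≤ ∑ _t ∈ Finset.range ℓ, ENNReal.ofReal (1 / (n' : ℝ)) :=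
        Finset.sum_le_sum (fun t _ => sector_measure_le α R hα hR n' hn' _)
    _ = (ℓ : ENNReal) * ENNReal.ofReal (1 / (n' : ℝ)) := by
        rw [Finset.sum_const, Finset.card_range, nsmul_eq_mul]

lemma expectation_window_le (α R : ℝ) (hα : 0 < α) (hR : 0 < R)
    {Ω : Type} [MeasurableSpace Ω] (μ : Measure Ω) [IsProbabilityMeasure μ]
    (n : ℕ) (pts : Fin n → Ω → ℝ × ℝ) (hmeas : ∀ i, Measurable (pts i))
    (hlaw : ∀ i, Measure.map (pts i) μ = hrgMeasure α R)
    (n' : ℕ) (hn' : 0 < n') (j : ZMod n') (ℓ : ℕ) :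
    (∫ ω, (ptsInWindow n' (fun i => (pts i ω).1) j ℓ : ℝ) ∂μ) ≤ (n : ℝ) * ℓ / n' := by
  classical
  set Swin := {p : ℝ × ℝ | ∃ t : ℕ, t < ℓ ∧ sectorIdx n' p.1 = j + (t : ZMod n')} with hSwin
  have hSm : MeasurableSet Swin := window_measurableSet n' j ℓ
  have hAm : ∀ i, MeasurableSet (pts i ⁻¹' Swin) := fun i => (hmeas i) hSm
  have hpoint : ∀ ω, ((ptsInWindow n' (fun i => (pts i ω).1) j ℓ : ℕ) : ℝ)
      = ∑ i : Fin n, (pts i ⁻¹' Swin).indicator (fun _ => (1:ℝ)) ω := by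
    intro ω
    unfold ptsInWindow
    have h1 : {i : Fin n | ∃ t : ℕ, t < ℓ ∧ sectorIdx n' ((pts i ω).1) = j + (t : ZMod n')}
        = ↑(Finset.univ.filter (fun i : Fin n => pts i ω ∈ Swin)) := by
      ext i
      simp only [Set.mem_setOf_eq, Finset.coe_filter, Finset.mem_univ, true_and, hSwin]
    rw [h1, Nat.card_coe_set_eq, Set.ncard_coe_finset]
    rw [← Finset.sum_boole]
    congr 1
    funext i
    rw [Set.indicator_apply]
    simp [Set.mem_preimage]
  have hint : ∀ i : Fin n, Integrable ((pts i ⁻¹' Swin).indicator (fun _ => (1:ℝ))) μ :=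
    fun i => (integrable_const (1:ℝ)).indicator (hAm i)
  rw [show (fun ω => ((ptsInWindow n' (fun i => (pts i ω).1) j ℓ : ℕ) : ℝ))
      = fun ω => ∑ i : Fin n, (pts i ⁻¹' Swin).indicator (fun _ => (1:ℝ)) ω
      from funext hpoint]
  rw [integral_finset_sum _ (fun i _ => hint i)]
  have hbound : ∀ i : Fin n, ∫ ω, (pts i ⁻¹' Swin).indicator (fun _ => (1:ℝ)) ω ∂μ ≤ ℓ / n' := by
    intro i
    rw [integral_indicator_const (1:ℝ) (hAm i), smul_eq_mul, mul_one]
    have h2 : μ (pts i ⁻¹' Swin) ≤ (ℓ : ENNReal) * ENNReal.ofReal (1 / (n' : ℝ)) := by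
      rw [← Measure.map_apply (hmeas i) hSm, hlaw i]
      exact window_measure_le α R hα hR n' hn' j ℓ
    have h3 := ENNReal.toReal_mono (by finiteness) h2
    rw [ENNReal.toReal_mul, ENNReal.toReal_ofReal (by positivity)] at h3
    have h4 : ((ℓ : ENNReal)).toReal = (ℓ:ℝ) := by simp
    rw [h4] at h3
    calc (μ (pts i ⁻¹' Swin)).toReal ≤ (ℓ:ℝ) * (1/(n':ℝ)) := h3
      _ = ℓ / n' := by ring
  calc ∑ i : Fin n, ∫ ω, (pts i ⁻¹' Swin).indicator (fun _ => (1:ℝ)) ω ∂μ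
      ≤ ∑ _i : Fin n, (ℓ:ℝ)/(n':ℝ) := Finset.sum_le_sum (fun i _ => hbound i)
    _ = (n:ℝ) * ℓ / n' := by
        rw [Finset.sum_const, Finset.card_univ, Fintype.card_fin, nsmul_eq_mul]
        ring


/-- **Expected number of vertices in a narrow run.**
For a family of hyperbolic random graphs on `n` vertices with parameters
`α ∈ (1/2,1)`, `C`, and fixed `τ > 0`: for every fixed angular interval `I` made of at
most `w = e^{γ}·log^{(3)} n` consecutive sectors, the expected number of sampled points
with angular coordinate in `I` is at most
`(1/2)·e^{γ}·log^{(3)}(n)·γ·(1 ± o(1))`; in particular, for all sufficiently large `n`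
it is at most `(1/2)·τ·log^{(2)}(n)`. -/
theorem expected_vertices_in_narrow_run
    (α C τ : ℝ) (hα : α ∈ Set.Ioo (1 / 2 : ℝ) 1) (hτ : 0 < τ)
    (Ω : ℕ → Type) (mΩ : ∀ n, MeasurableSpace (Ω n))
    (μ : ∀ n, Measure (Ω n)) (hμ : ∀ n, IsProbabilityMeasure (μ n))
    (pts : ∀ n, Fin n → Ω n → ℝ × ℝ)
    (hhrg : ∀ n, IsHRG α C n (μ n) (pts n)) :
    ∃ ε : ℕ → ℝ, Tendsto ε atTop (nhds 0) ∧
      (∀ᶠ n : ℕ in atTop, ∀ (j : ZMod (nSec C τ n)) (ℓ : ℕ), (ℓ : ℝ) ≤ wThr n τ →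
        (∫ ω, (ptsInWindow (nSec C τ n) (fun i => (pts n i ω).1) j ℓ : ℝ) ∂(μ n)) ≤
          1 / 2 * Real.exp (gam n τ) * logloglog n * gam n τ * (1 + ε n)) ∧
      (∀ᶠ n : ℕ in atTop, ∀ (j : ZMod (nSec C τ n)) (ℓ : ℕ), (ℓ : ℝ) ≤ wThr n τ →
        (∫ ω, (ptsInWindow (nSec C τ n) (fun i => (pts n i ω).1) j ℓ : ℝ) ∂(μ n)) ≤
          1 / 2 * τ * loglog n) := by
  classical
  have hα0 : 0 < α := lt_trans one_half_pos hα.1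
  set ε : ℕ → ℝ := fun n => max 0 (2 * ((n:ℝ) / (nSec C τ n : ℝ)) / gam n τ - 1) with hεdef
  have hsmall_ev : ∀ᶠ n : ℕ in atTop, Real.pi * gam n τ / (n:ℝ) ≤ 1/4 := by
    have h := (tendsto_gam_div_n τ hτ).const_mul Real.pi
    rw [mul_zero] at h
    filter_upwards [h.eventually (eventually_le_nhds (by norm_num : (0:ℝ) < 1/4))] with n hn
    rw [← mul_div_assoc] at hn
    exact hn
  have hB_ev : ∀ᶠ n : ℕ in atTop, Bfun C τ n ≤ 1/2 :=
    (tendsto_Bfun C τ hτ).eventually (eventually_le_nhds (by norm_num : (0:ℝ) < 1/2))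
  have hEV1 : ∀ᶠ n : ℕ in atTop, 1 ≤ nSec C τ n ∧
      2 * ((n:ℝ) / (nSec C τ n)) / gam n τ ≤ Afun C τ n / (1 - Bfun C τ n) := by
    filter_upwards [(tendsto_rho C τ hτ).eventually_ge_atTop 1,
      (tendsto_bigR C).eventually_gt_atTop 0,
      (tendsto_gam τ hτ).eventually_ge_atTop 1,
      eventually_ge_atTop 1, hsmall_ev, hB_ev] with n h1 h2 h3 h4 h5 h6
    exact main_bounds C τ n h1 h2 h3 h4 h5 h6
  have hεt : Tendsto ε atTop (nhds 0) := by
    refine squeeze_zero' (g := fun n => max 0 (Afun C τ n / (1 - Bfun C τ n) - 1))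
      (Eventually.of_forall fun n => le_max_left _ _) ?_ ?_
    · filter_upwards [hEV1] with n hn
      exact max_le_max le_rfl (by linarith [hn.2])
    · have hG := tendsto_G C τ hτ
      have h := (tendsto_const_nhds (x := (0:ℝ))).max (hG.sub (tendsto_const_nhds (x := (1:ℝ))))
      norm_num at h
      exact h
  have hEmain : ∀ᶠ n : ℕ in atTop, ∀ (j : ZMod (nSec C τ n)) (ℓ : ℕ), (ℓ : ℝ) ≤ wThr n τ →
      (∫ ω, (ptsInWindow (nSec C τ n) (fun i => (pts n i ω).1) j ℓ : ℝ) ∂(μ n)) ≤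
        1 / 2 * Real.exp (gam n τ) * logloglog n * gam n τ * (1 + ε n) := by
    filter_upwards [hEV1, (tendsto_gam τ hτ).eventually_ge_atTop 1,
      (tendsto_bigR C).eventually_gt_atTop 0,
      tendsto_logloglog.eventually_ge_atTop 0] with n hEV hγ1 hR hLLL
    intro j ℓ hℓ
    haveI := hμ n
    have hn' : 0 < nSec C τ n := hEV.1
    have hExp := expectation_window_le α (bigR C n) hα0 hR (μ n) n (pts n)
      (hhrg n).meas (hhrg n).law (nSec C τ n) hn' j ℓ
    have hγ0 : (0:ℝ) < gam n τ := by linarith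
    have hN' : (0:ℝ) < (nSec C τ n : ℝ) := by exact_mod_cast hn'
    have hnn' : (0:ℝ) ≤ (n:ℝ) / (nSec C τ n) := by positivity
    have hεn : 2 * ((n:ℝ) / (nSec C τ n)) / gam n τ - 1 ≤ ε n := le_max_right _ _
    have hkey : (n:ℝ) / (nSec C τ n) ≤ gam n τ / 2 * (1 + ε n) := by
      have h1 : gam n τ / 2 * (2 * ((n:ℝ) / (nSec C τ n)) / gam n τ)
          = (n:ℝ) / (nSec C τ n) := by
        field_simp
      have h2 : gam n τ / 2 * (2 * ((n:ℝ) / (nSec C τ n)) / gam n τ)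
          ≤ gam n τ / 2 * (1 + ε n) :=
        mul_le_mul_of_nonneg_left (by linarith) (by positivity)
      rw [h1] at h2
      exact h2
    have hw0 : 0 ≤ wThr n τ := mul_nonneg (Real.exp_pos _).le hLLL
    calc (∫ ω, (ptsInWindow (nSec C τ n) (fun i => (pts n i ω).1) j ℓ : ℝ) ∂(μ n))
        ≤ (n:ℝ) * ℓ / (nSec C τ n) := hExp
      _ = (ℓ:ℝ) * ((n:ℝ) / (nSec C τ n)) := by ring
      _ ≤ wThr n τ * ((n:ℝ) / (nSec C τ n)) := mul_le_mul_of_nonneg_right hℓ hnn'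
      _ ≤ wThr n τ * (gam n τ / 2 * (1 + ε n)) := mul_le_mul_of_nonneg_left hkey hw0
      _ = 1 / 2 * Real.exp (gam n τ) * logloglog n * gam n τ * (1 + ε n) := by
          unfold wThr; ring
  refine ⟨ε, hεt, hEmain, ?_⟩
  have hquot : Tendsto (fun n => gam n τ / logloglog n * (1 + ε n)) atTop (nhds 1) := by
    have h := (tendsto_gam_div_LLL τ hτ).mul ((tendsto_const_nhds (x := (1:ℝ))).add hεt)
    norm_num at h
    exact h
  have hEV2 : ∀ᶠ n : ℕ in atTop,
      1 / 2 * Real.exp (gam n τ) * logloglog n * gam n τ * (1 + ε n) ≤ 1 / 2 * τ * loglog n := by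
    filter_upwards [hquot.eventually (eventually_le_nhds (by norm_num : (1:ℝ) < 2)),
      tendsto_loglog.eventually_gt_atTop 0, tendsto_logloglog.eventually_gt_atTop 0]
      with n h1 h2 h3
    have hexp : Real.exp (gam n τ) = τ * loglog n / (2 * (logloglog n)^2) := by
      unfold gam
      exact Real.exp_log (by positivity)
    have heq : 1 / 2 * Real.exp (gam n τ) * logloglog n * gam n τ * (1 + ε n)
        = τ * loglog n / 4 * (gam n τ / logloglog n * (1 + ε n)) := by
      rw [hexp]
      field_simp
      ring
    rw [heq]
    have hc0 : (0:ℝ) ≤ τ * loglog n / 4 := by positivity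
    calc τ * loglog n / 4 * (gam n τ / logloglog n * (1 + ε n))
        ≤ τ * loglog n / 4 * 2 := mul_le_mul_of_nonneg_left h1 hc0
      _ = 1 / 2 * τ * loglog n := by ring
  filter_upwards [hEmain, hEV2] with n h1 h2
  intro j ℓ hℓ
  exact le_trans (h1 j ℓ hℓ) h2
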